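/- arXiv:2205.11066 — 3 statements merged into one kernel-verified Lean document; each statement's English description precedes it below -/
import Mathlib

section
/- Let d ≥ 1, N ≥ 1, and let α(1),…,α(N) ∈ ℤ^d be pairwise distinct. Then there exist w(1),…,w(N) ∈ ℂ^d with |w(i)_k| = 1 for all i, k, such that the N×N complex matrix M with entries M_{ij} = ∏_{k=1}^d (w(i)_k)^{α(j)_k} (integer powers of nonzero complex numbers) is invertible. -/
open MeasureTheory

noncomputable section

def eNormSq (d : ℕ) (z : Fin d → ℂ) : ℝ := ∑ j, Complex.normSq (z j)

def eNorm (d : ℕ) (z : Fin d → ℂ) : ℝ := Real.sqrt (eNormSq d z)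

def eInner (d : ℕ) (z w : Fin d → ℂ) : ℂ := ∑ j, z j * (starRingEnd ℂ) (w j)

def fockIntegrand (d : ℕ) (f : (Fin d → ℂ) → ℂ) (z : Fin d → ℂ) : ℝ :=
  ‖f z‖ ^ 2 * Real.exp (-(eNormSq d z) / 2)

def MemFock (d : ℕ) (f : (Fin d → ℂ) → ℂ) : Prop :=
  Differentiable ℂ f ∧ Integrable (fockIntegrand d f)

def fockNorm (d : ℕ) (f : (Fin d → ℂ) → ℂ) : ℝ :=
  Real.sqrt (((2 * Real.pi) ^ d)⁻¹ * ∫ z, fockIntegrand d f z)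

def BddHyp (d : ℕ) (A : Matrix (Fin d) (Fin d) ℂ) (b : Fin d → ℂ) : Prop :=
  (∀ v, eNorm d (A.mulVec v) ≤ eNorm d v) ∧
  (∀ v, eNorm d (A.mulVec v) = eNorm d v → eInner d (A.mulVec v) b = 0)

def affMap (d : ℕ) (A : Matrix (Fin d) (Fin d) ℂ) (b : Fin d → ℂ) : (Fin d → ℂ) → (Fin d → ℂ) :=
  fun z => A.mulVec z + b

def IsCyclicVector (d : ℕ) (A : Matrix (Fin d) (Fin d) ℂ) (b : Fin d → ℂ)
    (h : (Fin d → ℂ) → ℂ) : Prop :=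
  MemFock d h ∧ ∀ g : (Fin d → ℂ) → ℂ, MemFock d g → ∀ ε : ℝ, 0 < ε →
    ∃ (m : ℕ) (c : ℕ → ℂ),
      fockNorm d (fun z => g z - ∑ n ∈ Finset.range (m + 1), c n * h ((affMap d A b)^[n] z)) < ε

def IsCyclicOp (d : ℕ) (A : Matrix (Fin d) (Fin d) ℂ) (b : Fin d → ℂ) : Prop :=
  ∃ h, IsCyclicVector d A b h

open Polynomial in
/-- Invertibility of a Vandermonde-like matrix with unimodular entries. -/
theorem vandermonde_like_invertible
    (d N : ℕ) (hd : 1 ≤ d) (hN : 1 ≤ N)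
    (α : Fin N → (Fin d → ℤ)) (hα : Function.Injective α) :
    ∃ w : Fin N → (Fin d → ℂ),
      (∀ i k, ‖w i k‖ = 1) ∧
      IsUnit (Matrix.of (fun i j : Fin N => ∏ k, (w i k) ^ (α j k))).det := by
  classical
  set π := Real.pi with hπ
  set P : (Fin d → ℤ) → ℤ → ℝ[X] := fun β m =>
    (∑ k : Fin d, C ((β k : ℝ)) * X ^ ((k : ℕ) + 1)) - C (2 * π * m) with hP
  set B : Set ℝ := ⋃ q : (Fin N × Fin N) × ℤ,
    {x | q.1.1 ≠ q.1.2 ∧ (P (α q.1.1 - α q.1.2) q.2).IsRoot x} with hB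
  have hBc : B.Countable := by
    apply Set.countable_iUnion
    intro q
    by_cases hq : q.1.1 = q.1.2
    · convert Set.countable_empty
      ext x; simp [hq]
    · have hβ : α q.1.1 - α q.1.2 ≠ 0 := sub_ne_zero.mpr (fun h => hq (hα h))
      obtain ⟨k0, hk0⟩ := Function.ne_iff.mp hβ
      have hPne : P (α q.1.1 - α q.1.2) q.2 ≠ 0 := by
        intro h
        have h2 := congrArg (fun p => coeff p ((k0 : ℕ) + 1)) h
        simp only [hP, coeff_sub, finset_sum_coeff, coeff_C_mul, coeff_X_pow, coeff_C,
          coeff_zero] at h2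
        rw [Finset.sum_eq_single k0] at h2
        · simp at h2
          exact hk0 (by exact_mod_cast h2)
        · intro k _ hk
          rw [if_neg (by simp only [add_left_inj, Fin.val_inj]; exact fun h => hk h.symm),
            mul_zero]
        · simp
      exact ((Polynomial.finite_setOf_isRoot hPne).subset (fun x hx => hx.2)).countable
  have hex : ∃ θ : ℝ, θ ∉ B := by
    by_contra h
    push_neg at h
    exact Cardinal.not_countable_real (hBc.mono (fun x _ => h x))
  obtain ⟨θ, hθ⟩ := hex
  set g : Fin N → ℝ := fun j => ∑ k : Fin d, (α j k : ℝ) * θ ^ ((k : ℕ) + 1) with hg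
  set x : Fin N → ℂ := fun j => Complex.exp ((g j : ℝ) * Complex.I) with hx
  refine ⟨fun i k => Complex.exp ((θ ^ ((k:ℕ)+1) : ℝ) * Complex.I) ^ (i : ℕ), ?_, ?_⟩
  · intro i k
    rw [norm_pow, Complex.norm_exp_ofReal_mul_I, one_pow]
  have key : ∀ i j : Fin N,
      (∏ k : Fin d, (Complex.exp ((θ ^ ((k:ℕ)+1) : ℝ) * Complex.I) ^ (i : ℕ)) ^ (α j k))
        = x j ^ (i : ℕ) := by
    intro i j
    have h1 : ∀ k : Fin d,
        (Complex.exp ((θ ^ ((k:ℕ)+1) : ℝ) * Complex.I) ^ (i : ℕ)) ^ (α j k)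
          = Complex.exp ((α j k : ℂ) * ((i : ℕ) * (((θ ^ ((k:ℕ)+1) : ℝ)) * Complex.I))) := by
      intro k
      rw [← Complex.exp_nat_mul, ← Complex.exp_int_mul]
    rw [Finset.prod_congr rfl (fun k _ => h1 k), ← Complex.exp_sum, hx]
    rw [← Complex.exp_nat_mul]
    congr 1
    rw [hg, Complex.ofReal_sum, Finset.sum_mul, Finset.mul_sum]
    refine Finset.sum_congr rfl fun k _ => ?_
    push_cast
    ring
  show IsUnit (Matrix.of (fun i j : Fin N =>
      ∏ k : Fin d, (Complex.exp ((θ ^ ((k:ℕ)+1) : ℝ) * Complex.I) ^ (i : ℕ)) ^ (α j k))).det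
  have hM : Matrix.of (fun i j : Fin N =>
      ∏ k : Fin d, (Complex.exp ((θ ^ ((k:ℕ)+1) : ℝ) * Complex.I) ^ (i : ℕ)) ^ (α j k))
      = (Matrix.vandermonde x).transpose := by
    ext i j
    simp only [Matrix.of_apply, Matrix.transpose_apply, Matrix.vandermonde_apply]
    exact key i j
  rw [hM, Matrix.det_transpose, Matrix.det_vandermonde, isUnit_iff_ne_zero]
  apply Finset.prod_ne_zero_iff.mpr
  intro i _
  apply Finset.prod_ne_zero_iff.mpr
  intro j hj
  rw [Finset.mem_Ioi] at hj
  rw [sub_ne_zero]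
  intro hxx
  have hij : j ≠ i := ne_of_gt hj
  have h1 : Complex.exp (((g j - g i : ℝ)) * Complex.I) = 1 := by
    have h0 : x j / x i = 1 := by rw [hxx]; exact div_self (Complex.exp_ne_zero _)
    rw [hx] at h0
    simpa [Complex.ofReal_sub, sub_mul, Complex.exp_sub] using h0
  rw [Complex.exp_eq_one_iff] at h1
  obtain ⟨n, hn⟩ := h1
  have hn' : ((g j - g i : ℝ) : ℂ) * Complex.I = ((n : ℂ) * (2 * (π : ℂ))) * Complex.I := by
    rw [hn]; push_cast; ring
  have hI := mul_right_cancel₀ Complex.I_ne_zero hn'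
  have hgn : (g j - g i : ℝ) = n * (2 * π) := by exact_mod_cast hI
  apply hθ
  rw [hB]
  refine Set.mem_iUnion.mpr ⟨⟨⟨j, i⟩, n⟩, hij, ?_⟩
  simp only [hP, IsRoot, eval_sub, eval_finset_sum, eval_mul, eval_C, eval_pow, eval_X]
  have h3 : ∑ k : Fin d, ((α j - α i) k : ℝ) * θ ^ ((k:ℕ)+1) = g j - g i := by
    rw [hg, ← Finset.sum_sub_distrib]
    refine Finset.sum_congr rfl fun k _ => ?_
    simp only [Pi.sub_apply]
    push_cast
    ring
  rw [h3, hgn]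
  push_cast
  ring
end
end

section
/- Let d ≥ 1, let A be a d×d complex matrix and b ∈ ℂ^d, suppose the pair (A,b) satisfies the standing boundedness hypothesis, and set φ(z) = Az + b. Then C_φ is not supercyclic for the topology of pointwise convergence: there is no f ∈ F(ℂ^d) such that for every g ∈ F(ℂ^d), every finite set S ⊆ ℂ^d and every ε > 0 there exist n ∈ ℕ and c ∈ ℂ with |c · f(φ^∘n(z)) − g(z)| < ε for all z ∈ S (φ^∘n the n-fold iterate of φ). -/
open MeasureTheory

noncomputable section

lemma euclid_norm_eq (d : ℕ) (v : EuclideanSpace ℂ (Fin d)) :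
    ‖v‖ = eNorm d (fun j => v j) := by
  rw [EuclideanSpace.norm_eq]
  unfold eNorm eNormSq
  congr 1
  refine Finset.sum_congr rfl fun j _ => ?_
  rw [Complex.sq_norm]

lemma exists_fixed_point (d : ℕ) (A : Matrix (Fin d) (Fin d) ℂ) (b : Fin d → ℂ)
    (h1 : ∀ v, eNorm d (A.mulVec v) ≤ eNorm d v)
    (h2 : ∀ v, eNorm d (A.mulVec v) = eNorm d v → eInner d (A.mulVec v) b = 0) :
    ∃ p : Fin d → ℂ, A.mulVec p + b = p := by
  classical
  set E := EuclideanSpace ℂ (Fin d)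
  set T : E →ₗ[ℂ] E := Matrix.toEuclideanLin A with hT
  have hTapp : ∀ v : E, T v = (fun j => A.mulVec (fun i => v i) j : Fin d → ℂ) := by
    intro v; rfl
  -- contraction
  have hcontr : ∀ v : E, ‖T v‖ ≤ ‖v‖ := by
    intro v
    rw [euclid_norm_eq, euclid_norm_eq]
    have := h1 (fun i => v i)
    simpa [hTapp] using this
  -- adjoint contraction
  have hadj : ∀ v : E, ‖LinearMap.adjoint T v‖ ≤ ‖v‖ := by
    intro v
    by_cases h0 : ‖LinearMap.adjoint T v‖ = 0
    · rw [h0]; exact norm_nonneg v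
    have hpos : 0 < ‖LinearMap.adjoint T v‖ := lt_of_le_of_ne (norm_nonneg _) (Ne.symm h0)
    have key : ‖LinearMap.adjoint T v‖ ^ 2
        = RCLike.re (inner (𝕜 := ℂ) (LinearMap.adjoint T v) (LinearMap.adjoint T v)) := by
      rw [inner_self_eq_norm_sq]
    rw [LinearMap.adjoint_inner_left] at key
    have hcs : RCLike.re (inner (𝕜 := ℂ) v (T (LinearMap.adjoint T v)))
        ≤ ‖v‖ * ‖LinearMap.adjoint T v‖ := by
      calc RCLike.re (inner (𝕜 := ℂ) v (T (LinearMap.adjoint T v)))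
          ≤ ‖(inner (𝕜 := ℂ) v (T (LinearMap.adjoint T v)) : ℂ)‖ := RCLike.re_le_norm _
        _ ≤ ‖v‖ * ‖T (LinearMap.adjoint T v)‖ := norm_inner_le_norm _ _
        _ ≤ ‖v‖ * ‖LinearMap.adjoint T v‖ := by
            exact mul_le_mul_of_nonneg_left (hcontr _) (norm_nonneg v)
    nlinarith [key, hcs]
  -- unit eigenvectors of T are eigenvectors of adjoint
  have hfix : ∀ v : E, T v = v → LinearMap.adjoint T v = v := by
    intro v hv
    have hsq : ‖LinearMap.adjoint T v - v‖ ^ 2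
        = ‖LinearMap.adjoint T v‖ ^ 2
          - 2 * RCLike.re (inner (𝕜 := ℂ) (LinearMap.adjoint T v) v) + ‖v‖ ^ 2 :=
      norm_sub_sq _ _
    have hre : RCLike.re (inner (𝕜 := ℂ) (LinearMap.adjoint T v) v) = ‖v‖ ^ 2 := by
      rw [LinearMap.adjoint_inner_left, hv, inner_self_eq_norm_sq]
    have h1' : ‖LinearMap.adjoint T v‖ ^ 2 ≤ ‖v‖ ^ 2 :=
      pow_le_pow_left₀ (norm_nonneg _) (hadj v) 2
    have hle0 : ‖LinearMap.adjoint T v - v‖ ^ 2 ≤ 0 := by nlinarith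
    have h00 : ‖LinearMap.adjoint T v - v‖ = 0 := by
      have := sq_nonneg ‖LinearMap.adjoint T v - v‖
      have : ‖LinearMap.adjoint T v - v‖ ^ 2 = 0 := le_antisymm hle0 this
      exact pow_eq_zero_iff (by norm_num) |>.mp this
    have := norm_eq_zero.mp h00
    linear_combination (norm := module) this
  -- the map M = 1 - T
  set M : E →ₗ[ℂ] E := LinearMap.id - T with hM
  have hkerM : ∀ v : E, v ∈ LinearMap.ker M ↔ T v = v := by
    intro v
    simp only [hM, LinearMap.mem_ker, LinearMap.sub_apply, LinearMap.id_apply, sub_eq_zero]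
    exact ⟨fun h => h.symm, fun h => h.symm⟩
  -- range M ≤ (ker M)ᗮ
  have hle : LinearMap.range M ≤ (LinearMap.ker M)ᗮ := by
    rintro - ⟨x, rfl⟩
    intro v hv
    have hTv : T v = v := (hkerM v).mp hv
    have : inner (𝕜 := ℂ) v (M x) = 0 := by
      simp only [hM, LinearMap.sub_apply, LinearMap.id_apply, inner_sub_right]
      have : inner (𝕜 := ℂ) v (T x) = inner (𝕜 := ℂ) v x := by
        rw [← LinearMap.adjoint_inner_left, hfix v hTv]
      rw [inner_sub_right, this, sub_self]
    exact this
  have heq : LinearMap.range M = (LinearMap.ker M)ᗮ := by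
    apply Submodule.eq_of_le_of_finrank_eq hle
    have e1 : Module.finrank ℂ (LinearMap.range M) + Module.finrank ℂ (LinearMap.ker M)
        = Module.finrank ℂ E := LinearMap.finrank_range_add_finrank_ker M
    have e2 : Module.finrank ℂ (LinearMap.ker M) + Module.finrank ℂ ((LinearMap.ker M)ᗮ)
        = Module.finrank ℂ E := Submodule.finrank_add_finrank_orthogonal _
    omega
  -- b is orthogonal to ker M
  set bE : E := (WithLp.equiv 2 (Fin d → ℂ)).symm b with hbE
  have hbmem : bE ∈ (LinearMap.ker M)ᗮ := by
    rw [Submodule.mem_orthogonal]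
    intro v hv
    have hTv : T v = v := (hkerM v).mp hv
    have hAv : A.mulVec (fun i => v i) = (fun i => v i) := by
      have := congrArg (fun (w : E) (j : Fin d) => w j) hTv
      simpa [hTapp] using this
    have hnorm : eNorm d (A.mulVec (fun i => v i)) = eNorm d (fun i => v i) := by rw [hAv]
    have h0 : eInner d (A.mulVec (fun i => v i)) b = 0 := h2 _ hnorm
    rw [hAv] at h0
    -- eInner d v b = ∑ v j * conj (b j) = 0 ; want ⟪v, bE⟫ = 0
    have : (inner (𝕜 := ℂ) v bE : ℂ) = (starRingEnd ℂ) (eInner d (fun i => v i) b) := by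
      simp only [PiLp.inner_apply, eInner, map_sum, map_mul, RCLike.inner_apply,
        RingHomCompTriple.comp_apply, Complex.conj_conj]
      refine Finset.sum_congr rfl fun j _ => ?_
      simp [hbE, mul_comm]
    rw [this, h0, map_zero]
  rw [← heq] at hbmem
  obtain ⟨x, hx⟩ := hbmem
  refine ⟨(fun i => x i), ?_⟩
  have hx' := congrArg (fun (w : E) (j : Fin d) => w j) hx
  have : (fun j => x j) - A.mulVec (fun i => x i) = b := by
    funext j
    have := congrFun hx' j
    have h' : x.ofLp j - (T x).ofLp j = b j := this
    rw [hTapp] at h'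
    exact h'
  funext j
  have := congrFun this j
  simp only [Pi.sub_apply] at this
  simp only [Pi.add_apply]
  linear_combination -this

lemma integrable_gauss_c : Integrable (fun w : ℂ => Real.exp (-(Complex.normSq w) / 4)) := by
  have h1 : Integrable (fun x : ℝ => Real.exp (-(1/4) * x ^ 2)) :=
    integrable_exp_neg_mul_sq (by norm_num)
  have h2 : Integrable (fun q : ℝ × ℝ =>
      Real.exp (-(1/4) * q.1 ^ 2) * Real.exp (-(1/4) * q.2 ^ 2)) := h1.mul_prod h1
  have h3 := (Complex.volume_preserving_equiv_real_prod).integrable_comp_emb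
    (Complex.measurableEquivRealProd.measurableEmbedding)
    (g := fun q : ℝ × ℝ => Real.exp (-(1/4) * q.1 ^ 2) * Real.exp (-(1/4) * q.2 ^ 2))
  rw [← h3] at h2
  convert h2 using 2 with w
  rfl
  simp only [Function.comp_apply, Complex.measurableEquivRealProd_apply]
  rw [← Real.exp_add, Complex.normSq_apply]
  congr 1
  ring

lemma integrable_gauss (d : ℕ) :
    Integrable (fun z : Fin d → ℂ => Real.exp (-(eNormSq d z) / 4)) := by
  have h := Integrable.fintype_prod (ι := Fin d)
    (f := fun _ (w : ℂ) => Real.exp (-(Complex.normSq w) / 4)) (fun _ => integrable_gauss_c)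
  convert h using 1
  rfl
  funext z
  rw [← Real.exp_sum]
  congr 1
  unfold eNormSq
  rw [← Finset.sum_div, Finset.sum_neg_distrib]
  rfl

lemma eNormSq_nonneg (d : ℕ) (v : Fin d → ℂ) : 0 ≤ eNormSq d v :=
  Finset.sum_nonneg fun j _ => Complex.normSq_nonneg _

lemma eNorm_nonneg' (d : ℕ) (v : Fin d → ℂ) : 0 ≤ eNorm d v := Real.sqrt_nonneg _

lemma abs_coord_le (d : ℕ) (v : Fin d → ℂ) (j : Fin d) : ‖v j‖ ≤ eNorm d v := by
  rw [Complex.norm_def]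
  exact Real.sqrt_le_sqrt (Finset.single_le_sum
    (fun i _ => Complex.normSq_nonneg (v i)) (Finset.mem_univ j))

lemma pi_norm_le_eNorm (d : ℕ) (v : Fin d → ℂ) : ‖v‖ ≤ eNorm d v := by
  rw [pi_norm_le_iff_of_nonneg (eNorm_nonneg' d v)]
  intro j
  exact abs_coord_le d v j

lemma continuous_eNormSq (d : ℕ) : Continuous (eNormSq d) := by
  unfold eNormSq
  exact continuous_finset_sum _ fun j _ => Complex.continuous_normSq.comp (continuous_apply j)

lemma memFock_affine (d : ℕ) (i0 : Fin d) (a : ℂ) (t : ℝ) :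
    MemFock d (fun w => 1 + (t : ℂ) * (w i0 - a)) := by
  constructor
  · have h1 : Differentiable ℂ (fun w : Fin d → ℂ => w i0) :=
      (ContinuousLinearMap.proj (R := ℂ) (φ := fun _ : Fin d => ℂ) i0).differentiable
    exact (differentiable_const _).add
      ((differentiable_const _).mul (h1.sub (differentiable_const _)))
  · set g : (Fin d → ℂ) → ℂ := fun w => 1 + (t : ℂ) * (w i0 - a) with hg
    set α : ℝ := 1 + |t| * ‖a‖ with hα
    set β : ℝ := |t| with hβ
    have hα0 : 0 ≤ α := by positivity
    have hβ0 : 0 ≤ β := by positivity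
    set C : ℝ := 2 * α ^ 2 + 8 * β ^ 2 with hC
    have hgc : Continuous g := by
      have h1 : Continuous (fun w : Fin d → ℂ => w i0) := continuous_apply i0
      continuity
    apply Integrable.mono' ((integrable_gauss d).const_mul C)
    · apply Continuous.aestronglyMeasurable
      unfold fockIntegrand
      exact ((continuous_norm.comp hgc).pow 2).mul
        ((((continuous_eNormSq d).neg).div_const 2).rexp)
    · refine Filter.Eventually.of_forall fun w => ?_
      set s : ℝ := eNormSq d w with hs
      have hs0 : 0 ≤ s := eNormSq_nonneg d w
      set E : ℝ := Real.exp (-s / 4) with hE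
      have hE0 : 0 < E := Real.exp_pos _
      have hE1 : E ≤ 1 := Real.exp_le_one_iff.mpr (by linarith)
      have h4 : s * E ≤ 4 := by
        have := Real.add_one_le_exp (s / 4)
        have hinv : E = (Real.exp (s / 4))⁻¹ := by
          rw [hE, ← Real.exp_neg]; ring_nf
        rw [hinv, mul_inv_le_iff₀ (Real.exp_pos _)]
        nlinarith [Real.exp_pos (s / 4)]
      set r : ℝ := ‖w i0‖ with hr
      have hr0 : 0 ≤ r := norm_nonneg _
      have h1 : ‖g w‖ ≤ α + β * r := by
        calc ‖g w‖ ≤ ‖(1:ℂ)‖ + ‖(t : ℂ) * (w i0 - a)‖ :=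
              norm_add_le _ _
          _ = 1 + |t| * ‖w i0 - a‖ := by
              rw [norm_one, norm_mul, Complex.norm_real, Real.norm_eq_abs]
          _ ≤ 1 + |t| * (r + ‖a‖) := by
              have := norm_sub_le (w i0) a
              nlinarith [abs_nonneg t, norm_sub_le (w i0) a]
          _ = α + β * r := by rw [hα, hβ]; ring
      have hrs : r ^ 2 ≤ s := by
        rw [hr, Complex.sq_norm]
        exact Finset.single_le_sum (fun i _ => Complex.normSq_nonneg (w i)) (Finset.mem_univ i0)
      have h2 : ‖g w‖ ^ 2 ≤ 2 * α ^ 2 + 2 * β ^ 2 * s := by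
        nlinarith [norm_nonneg (g w), sq_nonneg (α - β * r),
          mul_nonneg hβ0 hr0, sq_nonneg (β * r)]
      have hnorm : ‖fockIntegrand d g w‖ = fockIntegrand d g w := by
        rw [Real.norm_eq_abs, abs_of_nonneg]
        unfold fockIntegrand
        positivity
      rw [hnorm]
      have hsplit : Real.exp (-(eNormSq d w) / 2) = E * E := by
        rw [hE, ← Real.exp_add, ← hs]; ring_nf
      unfold fockIntegrand
      rw [hsplit]
      calc ‖g w‖ ^ 2 * (E * E)
          ≤ (2 * α ^ 2 + 2 * β ^ 2 * s) * (E * E) := by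
            apply mul_le_mul_of_nonneg_right h2 (by positivity)
        _ ≤ C * E := by
            have k1 : 2 * α ^ 2 * E * E ≤ 2 * α ^ 2 * E := by
              have h := mul_le_mul_of_nonneg_left hE1 (show (0:ℝ) ≤ 2 * α ^ 2 * E by positivity)
              nlinarith [h]
            have k2 : 2 * β ^ 2 * E * (s * E) ≤ 2 * β ^ 2 * E * 4 :=
              mul_le_mul_of_nonneg_left h4 (by positivity)
            rw [hC]; nlinarith [k1, k2, hE1, hE0.le, sq_nonneg α, sq_nonneg β]

/-- Composition operators on the Fock space are never pointwise supercyclic. -/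
theorem not_pointwise_supercyclic
    (d : ℕ) (hd : 1 ≤ d) (A : Matrix (Fin d) (Fin d) ℂ) (b : Fin d → ℂ)
    (hbdd : BddHyp d A b) :
    ¬ ∃ f : (Fin d → ℂ) → ℂ, MemFock d f ∧
      ∀ g : (Fin d → ℂ) → ℂ, MemFock d g →
        ∀ S : Finset (Fin d → ℂ), ∀ ε : ℝ, 0 < ε →
          ∃ (n : ℕ) (c : ℂ), ∀ z ∈ S,
            ‖c * f ((affMap d A b)^[n] z) - g z‖ < ε := by
  rintro ⟨f, hf, hsc⟩
  obtain ⟨p, hp⟩ := exists_fixed_point d A b hbdd.1 hbdd.2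
  set φ := affMap d A b with hφ
  have hfixit : ∀ n, φ^[n] p = p := by
    intro n
    induction n with
    | zero => rfl
    | succ n ih => rw [Function.iterate_succ_apply', ih]; exact hp
  set i0 : Fin d := ⟨0, hd⟩ with hi0
  set z : Fin d → ℂ := Function.update p i0 (p i0 + 1) with hz
  have hstep : ∀ w : Fin d → ℂ, φ w - p = A.mulVec (w - p) := by
    intro w
    rw [Matrix.mulVec_sub]
    show A.mulVec w + b - p = A.mulVec w - A.mulVec p
    calc A.mulVec w + b - p = A.mulVec w + b - (A.mulVec p + b) := by rw [hp]
      _ = A.mulVec w - A.mulVec p := by abel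
  have horb : ∀ n, eNorm d (φ^[n] z - p) ≤ eNorm d (z - p) := by
    intro n
    induction n with
    | zero => simp
    | succ n ih =>
      rw [Function.iterate_succ_apply', hstep]
      exact le_trans (hbdd.1 _) ih
  set R : ℝ := eNorm d (z - p) + ‖p‖ with hR
  have hR0 : 0 ≤ R := add_nonneg (eNorm_nonneg' _ _) (norm_nonneg _)
  have hball : ∀ n, φ^[n] z ∈ Metric.closedBall (0 : Fin d → ℂ) R := by
    intro n
    rw [Metric.mem_closedBall, dist_zero_right]
    calc ‖φ^[n] z‖ = ‖(φ^[n] z - p) + p‖ := by rw [sub_add_cancel]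
      _ ≤ ‖φ^[n] z - p‖ + ‖p‖ := norm_add_le _ _
      _ ≤ eNorm d (φ^[n] z - p) + ‖p‖ := by
          have := pi_norm_le_eNorm d (φ^[n] z - p); linarith
      _ ≤ R := by rw [hR]; linarith [horb n]
  obtain ⟨M, hM⟩ := (isCompact_closedBall (0 : Fin d → ℂ) R).exists_bound_of_continuousOn
    (hf.1.continuous.continuousOn)
  have hMz : ∀ n, ‖f (φ^[n] z)‖ ≤ M := fun n => by
    exact hM _ (hball n)
  have hM0 : 0 ≤ M := le_trans (norm_nonneg _) (hM 0 (Metric.mem_closedBall_self hR0))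
  -- Step A : f p ≠ 0
  obtain ⟨n₀, c₀, h₀⟩ := hsc (fun w => 1 + ((0:ℝ):ℂ) * (w i0 - p i0))
    (memFock_affine d i0 (p i0) 0) {p} (1/2) (by norm_num)
  have h₀p := h₀ p (Finset.mem_singleton_self p)
  rw [hfixit n₀] at h₀p
  simp only [Complex.ofReal_zero, zero_mul, add_zero] at h₀p
  have hfp : f p ≠ 0 := by
    intro h
    rw [h, mul_zero, zero_sub] at h₀p
    simp at h₀p
    norm_num at h₀p
  set F : ℝ := ‖f p‖ with hFdef
  have hF0 : 0 < F := norm_pos_iff.mpr hfp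
  clear_value F
  set tt : ℝ := 3 * M / F + 1 with htt
  have htt0 : 0 < tt := by rw [htt]; positivity
  clear_value tt
  obtain ⟨n, c, hc⟩ := hsc (fun w => 1 + ((tt:ℝ):ℂ) * (w i0 - p i0))
    (memFock_affine d i0 (p i0) tt) {p, z} (1/2) (by norm_num)
  have hcp := hc p (by simp)
  have hcz := hc z (by simp)
  rw [hfixit n] at hcp
  simp only [sub_self, mul_zero, add_zero] at hcp
  have e2 : z i0 - p i0 = 1 := by rw [hz]; simp
  rw [e2, mul_one] at hcz
  -- bounds
  have b1 : ‖c‖ * F < 3/2 := by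
    have h := norm_add_le (c * f p - 1) 1
    rw [sub_add_cancel, norm_mul, norm_one] at h
    rw [hFdef]
    linarith
  have b2 : tt + 1/2 < ‖c‖ * ‖f (φ^[n] z)‖ := by
    have h := norm_add_le ((1 + ((tt:ℝ):ℂ)) - c * f (φ^[n] z)) (c * f (φ^[n] z))
    rw [sub_add_cancel] at h
    have hms : ‖(1 + ((tt:ℝ):ℂ)) - c * f (φ^[n] z)‖
        = ‖c * f (φ^[n] z) - (1 + ((tt:ℝ):ℂ))‖ := by
      rw [norm_sub_rev]
    have habs1 : ‖1 + ((tt:ℝ):ℂ)‖ = 1 + tt := by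
      have : (1 : ℂ) + ((tt:ℝ):ℂ) = (((1 + tt : ℝ)):ℂ) := by push_cast; ring
      rw [this, Complex.norm_real, Real.norm_eq_abs, abs_of_pos (by linarith)]
    rw [norm_mul] at h
    rw [habs1, hms] at h
    have test : ‖c * f (φ^[n] z) - (1 + ((tt:ℝ):ℂ))‖ < 1/2 := hcz
    linarith [h, test]
  have b3 : ‖c‖ * ‖f (φ^[n] z)‖ ≤ ‖c‖ * M :=
    mul_le_mul_of_nonneg_left (hMz n) (norm_nonneg c)
  have hconv : tt * F = 3 * M + F := by
    rw [htt]; field_simp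
  have b4 : tt < ‖c‖ * M := by linarith [b2, b3]
  have key1 : tt * F < (‖c‖ * M) * F := mul_lt_mul_of_pos_right b4 hF0
  have key2 : (‖c‖ * F) * M ≤ (3/2) * M :=
    mul_le_mul_of_nonneg_right b1.le hM0
  have key3 : (‖c‖ * M) * F = (‖c‖ * F) * M := by ring
  linarith [key1, key2, key3, hconv, hF0, hM0]
end
end

section
/- Let d ≥ 1, let A be a d×d complex matrix with operator norm strictly less than 1, let b ∈ ℂ^d, set φ(z) = Az + b, and assume that C_φ is cyclic on F(ℂ^d). Then the set of cyclic vectors of C_φ, together with 0, does not contain a two-dimensional subspace: for any linearly independent f, g ∈ F(ℂ^d) there exist a, b' ∈ ℂ, not both zero, such that a·f + b'·g is not a cyclic vector for C_φ. -/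
open MeasureTheory

noncomputable section

namespace FockAux

open Metric Real Set intervalIntegral


lemma eNormSq_nonneg (d : ℕ) (z : Fin d → ℂ) : 0 ≤ eNormSq d z :=
  Finset.sum_nonneg fun _ _ => Complex.normSq_nonneg _

lemma eNorm_nonneg (d : ℕ) (z : Fin d → ℂ) : 0 ≤ eNorm d z := Real.sqrt_nonneg _

lemma eNormSq_eq_sq (d : ℕ) (z : Fin d → ℂ) : eNormSq d z = (eNorm d z) ^ 2 := by
  rw [eNorm, Real.sq_sqrt (eNormSq_nonneg d z)]

lemma eNorm_eq_norm (d : ℕ) (z : Fin d → ℂ) :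
    eNorm d z = ‖(WithLp.equiv 2 (Fin d → ℂ)).symm z‖ := by
  rw [EuclideanSpace.norm_eq, eNorm, eNormSq]
  congr 1
  refine Finset.sum_congr rfl fun j _ => ?_
  rw [← Complex.sq_norm]; rfl

lemma eNorm_add_le (d : ℕ) (u v : Fin d → ℂ) :
    eNorm d (u + v) ≤ eNorm d u + eNorm d v := by
  rw [eNorm_eq_norm, eNorm_eq_norm, eNorm_eq_norm, WithLp.equiv_symm_apply, WithLp.toLp_add]
  exact norm_add_le _ _

lemma eNorm_eq_zero {d : ℕ} {z : Fin d → ℂ} (h : eNorm d z = 0) : z = 0 := by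
  rw [eNorm_eq_norm, norm_eq_zero] at h
  have := congrArg (WithLp.equiv 2 (Fin d → ℂ)) h
  simpa using this

lemma gaussian_integrable (d : ℕ) {δ : ℝ} (hδ : 0 < δ) :
    Integrable (fun z : Fin d → ℂ => Real.exp (-δ * eNormSq d z)) := by
  have h1 : Integrable (fun x : ℂ => Real.exp (-δ * Complex.normSq x)) := by
    have h2 : Integrable (fun p : ℝ × ℝ =>
        Real.exp (-δ * p.1 ^ 2) * Real.exp (-δ * p.2 ^ 2)) := by
      rw [show (volume : Measure (ℝ × ℝ)) = (volume : Measure ℝ).prod volume from rfl]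
      exact (integrable_exp_neg_mul_sq hδ).mul_prod (integrable_exp_neg_mul_sq hδ)
    have := (Complex.volume_preserving_equiv_real_prod.integrable_comp_emb
      Complex.measurableEquivRealProd.measurableEmbedding).2 h2
    refine this.congr (Filter.Eventually.of_forall fun z => ?_)
    simp only [Function.comp, Complex.measurableEquivRealProd_apply]
    rw [← Real.exp_add, Complex.normSq_apply]
    ring_nf
  have := MeasureTheory.Integrable.fintype_prod (ι := Fin d)
    (f := fun _ (x : ℂ) => Real.exp (-δ * Complex.normSq x)) (fun _ => h1)
  refine this.congr (Filter.Eventually.of_forall fun z => ?_)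
  simp only [eNormSq, Finset.mul_sum, neg_mul]
  rw [Real.exp_sum]

lemma fockIntegrand_nonneg (d : ℕ) (f : (Fin d → ℂ) → ℂ) (z : Fin d → ℂ) :
    0 ≤ fockIntegrand d f z :=
  mul_nonneg (sq_nonneg _) (Real.exp_pos _).le

lemma fockIntegrand_continuous {d : ℕ} {f : (Fin d → ℂ) → ℂ} (hf : Continuous f) :
    Continuous (fockIntegrand d f) := by
  apply Continuous.mul
  · exact (continuous_norm.comp hf).pow 2
  · apply Real.continuous_exp.comp
    apply Continuous.div_const
    apply Continuous.neg
    exact continuous_finset_sum _ fun j _ =>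
      Complex.continuous_normSq.comp (continuous_apply j)

lemma memFock_const (d : ℕ) (c : ℂ) : MemFock d (fun _ : Fin d → ℂ => c) := by
  refine ⟨differentiable_const _, ?_⟩
  have := (gaussian_integrable d (δ := 1/2) (by norm_num)).const_mul (‖c‖ ^ 2)
  refine this.congr (Filter.Eventually.of_forall fun z => ?_)
  rw [fockIntegrand]
  ring_nf



/-- Circle sub-mean-value for entire functions. -/
lemma circle_mean (f : ℂ → ℂ) (hf : Differentiable ℂ f) (c : ℂ) {R : ℝ} (hR : 0 < R) :
    ‖f c‖ * (2 * π) ≤ ∫ θ in Ioo (-π) π, ‖f (circleMap c R θ)‖ := by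
  have key := Complex.two_pi_I_inv_smul_circleIntegral_sub_inv_smul_of_differentiable_on_off_countable
    (R := R) (c := c) (w := c) (f := f) (s := ∅) Set.countable_empty
    (Metric.mem_ball_self hR) hf.continuous.continuousOn
    (fun x _ => hf.differentiableAt)
  have h1 : (∮ z in C(c, R), (z - c)⁻¹ • f z)
      = ∫ θ in (0:ℝ)..(2*π), Complex.I • f (circleMap c R θ) := by
    rw [circleIntegral]
    refine intervalIntegral.integral_congr fun θ _ => ?_
    have hne : circleMap 0 R θ ≠ 0 := by
      have := circleMap_ne_center (c := (0:ℂ)) (R := R) hR.ne' (θ := θ)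
      simpa using this
    simp only [deriv_circleMap, circleMap_sub_center, smul_eq_mul]
    field_simp
  rw [h1, intervalIntegral.integral_smul, smul_smul] at key
  have hpiI : (2 * (π:ℂ) * Complex.I) ≠ 0 := by
    simp [Real.pi_ne_zero, Complex.I_ne_zero, Complex.ofReal_ne_zero]
  have h2 : ‖f c‖ * (2 * π)
      = ‖∫ θ in (0:ℝ)..(2*π), f (circleMap c R θ)‖ := by
    have h3 : ‖(2 * ↑π * Complex.I)⁻¹ * Complex.I‖ = (2*π)⁻¹ := by
      rw [norm_mul, norm_inv, norm_mul, norm_mul]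
      simp [Real.pi_pos.le]
    calc ‖f c‖ * (2 * π)
        = ‖(2 * ↑π * Complex.I)⁻¹ * Complex.I‖
          * ‖∫ θ in (0:ℝ)..(2*π), f (circleMap c R θ)‖ * (2 * π) := by
          rw [← key]
          rw [norm_smul]
      _ = ‖∫ θ in (0:ℝ)..(2*π), f (circleMap c R θ)‖ := by
          rw [h3, mul_comm ((2*π : ℝ))⁻¹ _, mul_assoc,
            inv_mul_cancel₀ (by positivity), mul_one]
  have h4 : ‖∫ θ in (0:ℝ)..(2*π), f (circleMap c R θ)‖
      ≤ ∫ θ in (0:ℝ)..(2*π), ‖f (circleMap c R θ)‖ := by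
    simpa using intervalIntegral.norm_integral_le_integral_norm
      (f := fun θ => f (circleMap c R θ)) (a := 0) (b := 2*π) (by positivity)
  have h5 : (∫ θ in (0:ℝ)..(2*π), ‖f (circleMap c R θ)‖)
      = ∫ θ in Ioo (-π) π, ‖f (circleMap c R θ)‖ := by
    have hper : Function.Periodic (fun θ => ‖f (circleMap c R θ)‖) (2*π) :=
      fun θ => by simp [(periodic_circleMap c R) θ]
    have := hper.intervalIntegral_add_eq (-π) 0
    have hco : -π + 2*π = π := by ring
    rw [hco, zero_add] at this
    rw [← this, intervalIntegral.integral_of_le (by linarith [Real.pi_pos]),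
      ← MeasureTheory.integral_Ioc_eq_integral_Ioo]
  calc ‖f c‖ * (2 * π) = _ := h2
    _ ≤ _ := h4
    _ = _ := h5

lemma integrableOn_of_continuous_bounded {α : Type*} [TopologicalSpace α]
    [MeasurableSpace α] [BorelSpace α] [T2Space α] {μ : Measure α} [IsFiniteMeasureOnCompacts μ]
    {g : α → ℝ} (hg : Continuous g) {s k : Set α} (hk : IsCompact k)
    (hsk : s ⊆ k) : IntegrableOn g s μ := by
  exact (hg.continuousOn.integrableOn_compact hk).mono_set hsk

/-- `c + polarCoord.symm (r, θ) = circleMap c r θ`. -/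
lemma polar_symm_eq_circleMap (c : ℂ) (r θ : ℝ) :
    c + Complex.polarCoord.symm (r, θ) = circleMap c r θ := by
  rw [Complex.polarCoord_symm_apply, circleMap]
  congr 1
  rw [Complex.exp_mul_I]
  push_cast
  rfl

lemma continuous_polar_symm : Continuous (Complex.polarCoord.symm : ℝ × ℝ → ℂ) := by
  have : (Complex.polarCoord.symm : ℝ × ℝ → ℂ)
      = fun p => ↑p.1 * (↑(Real.cos p.2) + ↑(Real.sin p.2) * Complex.I) := by
    funext p
    rw [Complex.polarCoord_symm_apply]
  rw [this]
  continuity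

/-- Disc sub-mean-value for entire functions. -/
lemma disc_mean (f : ℂ → ℂ) (hf : Differentiable ℂ f) (c : ℂ) {R : ℝ} (hR : 0 < R) :
    ‖f c‖ * (π * R ^ 2) ≤ ∫ z in ball c R, ‖f z‖ := by
  -- translate to ball centred at 0
  have htrans : (∫ z in ball c R, ‖f z‖)
      = ∫ z in ball (0:ℂ) R, ‖f (c + z)‖ := by
    rw [← MeasureTheory.integral_indicator measurableSet_ball,
      ← MeasureTheory.integral_indicator measurableSet_ball]
    rw [← MeasureTheory.integral_add_left_eq_self _ c]
    congr 1
    ext z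
    simp only [Set.indicator]
    have hmem : c + z ∈ ball c R ↔ z ∈ ball (0:ℂ) R := by
      simp [Metric.mem_ball, dist_eq_norm]
    by_cases h : z ∈ ball (0:ℂ) R
    · rw [if_pos (hmem.mpr h), if_pos h]
    · rw [if_neg (fun hh => h (hmem.mp hh)), if_neg h]
  set u : ℂ → ℝ := (ball (0:ℂ) R).indicator (fun z => ‖f (c + z)‖) with hu
  set F : ℝ × ℝ → ℝ := fun p => p.1 * ‖f (c + Complex.polarCoord.symm p)‖ with hF
  have hFcont : Continuous F :=
    continuous_fst.mul ((continuous_norm.comp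
      (hf.continuous.comp (continuous_const.add continuous_polar_symm))))
  have hpolar := Complex.integral_comp_polarCoord_symm u
  have hival : ∫ z, u z = ∫ z in ball (0:ℂ) R, ‖f (c + z)‖ :=
    integral_indicator measurableSet_ball
  -- identify the polar side with an integral over a rectangle
  have hset : (∫ p in Complex.polarCoord.target, p.1 • u (Complex.polarCoord.symm p))
      = ∫ p in Ioo (0:ℝ) R ×ˢ Ioo (-π) π, F p := by
    have heq : Set.EqOn (fun p : ℝ × ℝ => p.1 • u (Complex.polarCoord.symm p))
        ((Ioo (0:ℝ) R ×ˢ Ioo (-π) π).indicator F) Complex.polarCoord.target := by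
      intro p hp
      dsimp only
      rw [Complex.polarCoord_target] at hp
      obtain ⟨hp1, hp2⟩ := hp
      have habs : ‖Complex.polarCoord.symm p‖ = p.1 := by
        rw [Complex.norm_polarCoord_symm, abs_of_pos hp1]
      have hmem : Complex.polarCoord.symm p ∈ ball (0:ℂ) R ↔ p.1 < R := by
        rw [Metric.mem_ball, dist_zero_right, habs]
      by_cases h : p.1 < R
      · rw [Set.indicator_of_mem (show p ∈ Ioo (0:ℝ) R ×ˢ Ioo (-π) π from ⟨⟨hp1, h⟩, hp2⟩),
          hu, Set.indicator_of_mem (hmem.mpr h)]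
        simp [hF]
      · rw [Set.indicator_of_notMem (fun hh : p ∈ Ioo (0:ℝ) R ×ˢ Ioo (-π) π => h hh.1.2),
          hu, Set.indicator_of_notMem (fun hh => h (hmem.mp hh))]
        simp
    rw [MeasureTheory.setIntegral_congr_fun (Complex.polarCoord.open_target.measurableSet) heq,
      MeasureTheory.setIntegral_indicator (measurableSet_Ioo.prod measurableSet_Ioo),
      Set.inter_eq_self_of_subset_right]
    rw [Complex.polarCoord_target]
    exact Set.prod_mono Ioo_subset_Ioi_self subset_rfl
  -- integrability on the rectangle
  have hint : IntegrableOn F (Ioo (0:ℝ) R ×ˢ Ioo (-π) π) :=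
    integrableOn_of_continuous_bounded hFcont
      ((isCompact_Icc (a := (0:ℝ)) (b := R)).prod (isCompact_Icc (a := -π) (b := π)))
      (Set.prod_mono Ioo_subset_Icc_self Ioo_subset_Icc_self)
  have hint' : Integrable F ((volume.restrict (Ioo (0:ℝ) R)).prod
      (volume.restrict (Ioo (-π) π))) := by
    rwa [Measure.prod_restrict]
  -- Fubini
  have hfub : (∫ p in Ioo (0:ℝ) R ×ˢ Ioo (-π) π, F p)
      = ∫ r in Ioo (0:ℝ) R, ∫ θ in Ioo (-π) π, F (r, θ) := by
    exact MeasureTheory.setIntegral_prod F hint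
  -- lower bound on the inner integral
  have hmono : (∫ r in Ioo (0:ℝ) R, ‖f c‖ * (2 * π) * r)
      ≤ ∫ r in Ioo (0:ℝ) R, ∫ θ in Ioo (-π) π, F (r, θ) := by
    refine MeasureTheory.setIntegral_mono_on ?_ hint'.integral_prod_left measurableSet_Ioo ?_
    · exact integrableOn_of_continuous_bounded (continuous_const.mul continuous_id)
        (isCompact_Icc (a := (0:ℝ)) (b := R)) Ioo_subset_Icc_self
    · intro r hr
      have hr0 : 0 < r := hr.1
      have hinner : (∫ θ in Ioo (-π) π, F (r, θ))
          = r * ∫ θ in Ioo (-π) π, ‖f (circleMap c r θ)‖ := by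
        rw [← MeasureTheory.integral_const_mul]
        refine MeasureTheory.setIntegral_congr_fun measurableSet_Ioo fun θ _ => ?_
        simp only [hF]
        rw [polar_symm_eq_circleMap]
      rw [hinner]
      have := circle_mean f hf c hr0
      calc ‖f c‖ * (2 * π) * r
          ≤ (∫ θ in Ioo (-π) π, ‖f (circleMap c r θ)‖) * r :=
            mul_le_mul_of_nonneg_right this hr0.le
        _ = r * ∫ θ in Ioo (-π) π, ‖f (circleMap c r θ)‖ := mul_comm _ _
  -- compute the left side
  have hcomp : (∫ r in Ioo (0:ℝ) R, ‖f c‖ * (2 * π) * r)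
      = ‖f c‖ * (π * R ^ 2) := by
    rw [MeasureTheory.integral_const_mul, ← MeasureTheory.integral_Ioc_eq_integral_Ioo,
      ← intervalIntegral.integral_of_le hR.le, integral_id]
    ring
  calc ‖f c‖ * (π * R ^ 2)
      = ∫ r in Ioo (0:ℝ) R, ‖f c‖ * (2 * π) * r := hcomp.symm
    _ ≤ ∫ r in Ioo (0:ℝ) R, ∫ θ in Ioo (-π) π, F (r, θ) := hmono
    _ = ∫ p in Ioo (0:ℝ) R ×ˢ Ioo (-π) π, F p := hfub.symm
    _ = ∫ p in Complex.polarCoord.target, p.1 • u (Complex.polarCoord.symm p) := hset.symm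
    _ = ∫ z, u z := hpolar
    _ = ∫ z in ball (0:ℂ) R, ‖f (c + z)‖ := hival
    _ = ∫ z in ball c R, ‖f z‖ := htrans.symm

lemma cons_differentiable_snd {d : ℕ} (F : (Fin (d+1) → ℂ) → ℂ) (hF : Differentiable ℂ F)
    (x : ℂ) : Differentiable ℂ (fun y : Fin d → ℂ => F (Fin.cons x y)) := by
  apply hF.comp
  apply differentiable_pi.mpr
  intro j
  refine Fin.cases ?_ ?_ j
  · simpa using differentiable_const x
  · intro i
    simpa using differentiable_pi.mp differentiable_id i

lemma cons_differentiable_fst {d : ℕ} (F : (Fin (d+1) → ℂ) → ℂ) (hF : Differentiable ℂ F)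
    (y : Fin d → ℂ) : Differentiable ℂ (fun x : ℂ => F (Fin.cons x y)) := by
  apply hF.comp
  apply differentiable_pi.mpr
  intro j
  refine Fin.cases ?_ ?_ j
  · simpa using differentiable_id
  · intro i
    simpa using differentiable_const (y i)

lemma cons_continuous {d : ℕ} :
    Continuous (fun p : ℂ × (Fin d → ℂ) => (Fin.cons p.1 p.2 : Fin (d+1) → ℂ)) := by
  refine continuous_pi fun j => ?_
  refine Fin.cases ?_ ?_ j
  · simpa using continuous_fst
  · intro i
    simpa using (by fun_prop : Continuous fun a : ℂ × (Fin d → ℂ) => a.2 i)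

/-- Polydisc (sup-ball) sub-mean-value inequality for entire functions on `ℂ^d`. -/
lemma poly_mean : ∀ (d : ℕ) (F : (Fin d → ℂ) → ℂ), Differentiable ℂ F →
    ∀ (w : Fin d → ℂ) {R : ℝ}, 0 < R →
      ‖F w‖ * (π * R ^ 2) ^ d ≤ ∫ z in ball w R, ‖F z‖ := by
  intro d
  induction d with
  | zero =>
    intro F hF w R hR
    have h1 : ball w R = Set.univ := by
      ext z
      simp [Metric.mem_ball, Subsingleton.elim z w, hR]
    have h2 : ∀ z : Fin 0 → ℂ, ‖F z‖ = ‖F w‖ :=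
      fun z => by rw [Subsingleton.elim z w]
    rw [h1, MeasureTheory.setIntegral_univ]
    rw [MeasureTheory.integral_congr_ae (Filter.Eventually.of_forall h2)]
    rw [MeasureTheory.integral_const]
    simp [volume_pi, measureReal_def, Measure.pi_univ]
  | succ d ih =>
    intro F hF w R hR
    set e := (MeasurableEquiv.piFinSuccAbove (fun _ : Fin (d+1) => ℂ) 0) with he
    have hes : ∀ (x : ℂ) (y : Fin d → ℂ), e.symm (x, y) = Fin.cons x y := by
      intro x y
      rw [he, MeasurableEquiv.piFinSuccAbove_symm_apply]
      simp [Fin.insertNthEquiv, Fin.insertNth_zero']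
    set H : ℂ × (Fin d → ℂ) → ℝ := fun p => ‖F (Fin.cons p.1 p.2)‖ with hH
    have hHcont : Continuous H :=
      continuous_norm.comp (hF.continuous.comp cons_continuous)
    set s := ball (w 0) R with hs
    set t := ball (Fin.tail w) R with ht
    have hpre : e.symm ⁻¹' (ball w R) = s ×ˢ t := by
      ext ⟨x, y⟩
      rw [Set.mem_preimage, hes]
      simp only [Set.mem_prod, Metric.mem_ball, dist_pi_lt_iff hR, hs, ht]
      rw [Fin.forall_fin_succ]
      simp [Fin.tail, dist_pi_lt_iff hR]
    have hchange : (∫ z in ball w R, ‖F z‖) = ∫ p in s ×ˢ t, H p := by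
      have := ((MeasureTheory.volume_preserving_piFinSuccAbove
          (fun _ : Fin (d+1) => ℂ) 0).symm).setIntegral_preimage_emb
          (MeasurableEquiv.measurableEmbedding _) (fun z => ‖F z‖) (ball w R)
      rw [← this]
      rw [show (MeasurableEquiv.piFinSuccAbove (fun _ : Fin (d+1) => ℂ) 0).symm ⁻¹' (ball w R)
          = s ×ˢ t from hpre]
      refine MeasureTheory.setIntegral_congr_fun ((measurableSet_ball).prod measurableSet_ball)
        fun p _ => ?_
      rw [hH]
      have : e.symm p = Fin.cons p.1 p.2 := by rw [← hes p.1 p.2]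
      simp only [he] at this
      rw [this]
    have hintH : IntegrableOn H (s ×ˢ t) :=
      integrableOn_of_continuous_bounded hHcont
        ((isCompact_closedBall (w 0) R).prod (isCompact_closedBall (Fin.tail w) R))
        (Set.prod_mono ball_subset_closedBall ball_subset_closedBall)
    have hintH' : Integrable H ((volume.restrict s).prod (volume.restrict t)) := by
      rwa [Measure.prod_restrict]
    have hfub : (∫ p in s ×ˢ t, H p) = ∫ x in s, ∫ y in t, H (x, y) :=
      MeasureTheory.setIntegral_prod H hintH
    -- inner estimate via the inductive hypothesis
    have hmono : (∫ x in s, ‖F (Fin.cons x (Fin.tail w))‖ * (π * R ^ 2) ^ d)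
        ≤ ∫ x in s, ∫ y in t, H (x, y) := by
      refine MeasureTheory.setIntegral_mono_on ?_ hintH'.integral_prod_left measurableSet_ball ?_
      · exact integrableOn_of_continuous_bounded
          ((continuous_norm.comp (hF.continuous.comp
            (cons_continuous.comp (continuous_id.prodMk continuous_const)))).mul continuous_const)
          (isCompact_closedBall (w 0) R) ball_subset_closedBall
      · intro x _
        exact ih (fun y => F (Fin.cons x y)) (cons_differentiable_snd F hF x) (Fin.tail w) hR
    have houter : ‖F w‖ * (π * R ^ 2) * (π * R ^ 2) ^ d
        ≤ (∫ x in s, ‖F (Fin.cons x (Fin.tail w))‖) * (π * R ^ 2) ^ d := by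
      refine mul_le_mul_of_nonneg_right ?_ (by positivity)
      have := disc_mean (fun x => F (Fin.cons x (Fin.tail w)))
        (cons_differentiable_fst F hF (Fin.tail w)) (w 0) hR
      simpa [Fin.cons_self_tail] using this
    calc ‖F w‖ * (π * R ^ 2) ^ (d + 1)
        = ‖F w‖ * (π * R ^ 2) * (π * R ^ 2) ^ d := by ring
      _ ≤ (∫ x in s, ‖F (Fin.cons x (Fin.tail w))‖) * (π * R ^ 2) ^ d := houter
      _ = ∫ x in s, ‖F (Fin.cons x (Fin.tail w))‖ * (π * R ^ 2) ^ d := by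
          rw [← MeasureTheory.integral_mul_const]
      _ ≤ ∫ x in s, ∫ y in t, H (x, y) := hmono
      _ = ∫ p in s ×ˢ t, H p := hfub.symm
      _ = ∫ z in ball w R, ‖F z‖ := hchange.symm


lemma dist_coord_le {d : ℕ} (z w : Fin d → ℂ) (j : Fin d) :
    ‖z j - w j‖ ≤ dist z w := by
  have := dist_le_pi_dist z w j
  rwa [Complex.dist_eq] at this

/-- Pointwise bound for Fock functions. -/
lemma pointwise_bound {d : ℕ} {f : (Fin d → ℂ) → ℂ} (hfd : Differentiable ℂ f)
    (hfi : Integrable (fockIntegrand d f)) {R : ℝ} (hR : 0 < R) (w : Fin d → ℂ) :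
    ‖f w‖ ^ 2 ≤ ((π * R ^ 2) ^ d)⁻¹
      * Real.exp (((1 + R) * eNormSq d w + d * (R + R ^ 2)) / 2)
      * ∫ z, fockIntegrand d f z := by
  set B : ℝ := ((1 + R) * eNormSq d w + d * (R + R ^ 2)) / 2 with hB
  have hpos : (0:ℝ) < (π * R ^ 2) ^ d := by positivity
  -- apply poly_mean to f * f
  have hsq := poly_mean d (fun z => f z * f z) (hfd.mul hfd) w hR
  have habs : ∀ z, ‖f z * f z‖ = ‖f z‖ ^ 2 := fun z => by
    rw [norm_mul, sq]
  rw [habs] at hsq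
  have hsq2 : ‖f w‖ ^ 2 * (π * R ^ 2) ^ d
      ≤ ∫ z in ball w R, ‖f z‖ ^ 2 := by
    refine le_trans hsq (le_of_eq ?_)
    exact MeasureTheory.setIntegral_congr_fun measurableSet_ball fun z _ => habs z
  -- weight estimate on the ball
  have hweight : ∀ z ∈ ball w R, eNormSq d z ≤ 2 * B := by
    intro z hz
    rw [hB]
    have hj : ∀ j, Complex.normSq (z j) ≤ Complex.normSq (w j)
        + R * (Complex.normSq (w j) + 1) + R ^ 2 := by
      intro j
      have h1 : ‖z j‖ ≤ ‖w j‖ + R := by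
        have h2 := dist_coord_le z w j
        have h3 : dist z w < R := Metric.mem_ball.mp hz
        calc ‖z j‖ = ‖w j + (z j - w j)‖ := by ring_nf
          _ ≤ ‖w j‖ + ‖z j - w j‖ := norm_add_le _ _
          _ ≤ ‖w j‖ + R := by linarith
      have h4 : ‖z j‖ ^ 2 ≤ (‖w j‖ + R) ^ 2 :=
        pow_le_pow_left₀ (norm_nonneg _) h1 2
      have h5 : 2 * R * ‖w j‖ ≤ R * (‖w j‖ ^ 2 + 1) := by
        nlinarith [sq_nonneg (‖w j‖ - 1), hR.le]
      simp only [← Complex.sq_norm]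
      nlinarith [sq_nonneg (‖w j‖)]
    have hsum : eNormSq d z ≤ ∑ j, (Complex.normSq (w j)
        + R * (Complex.normSq (w j) + 1) + R ^ 2) := by
      rw [eNormSq]
      exact Finset.sum_le_sum fun j _ => hj j
    have hsum2 : (∑ j, (Complex.normSq (w j) + R * (Complex.normSq (w j) + 1) + R ^ 2))
        = (1 + R) * eNormSq d w + d * (R + R ^ 2) := by
      have hterm : ∀ j : Fin d, Complex.normSq (w j) + R * (Complex.normSq (w j) + 1) + R ^ 2
          = (1 + R) * Complex.normSq (w j) + (R + R ^ 2) := fun j => by ring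
      rw [Finset.sum_congr rfl fun j _ => hterm j, Finset.sum_add_distrib, ← Finset.mul_sum,
        Finset.sum_const, Finset.card_univ, Fintype.card_fin, eNormSq, nsmul_eq_mul]
    linarith [hsum, hsum2.le]
  -- compare |f|² with the Fock integrand on the ball
  have hcomp : (∫ z in ball w R, ‖f z‖ ^ 2)
      ≤ Real.exp B * ∫ z in ball w R, fockIntegrand d f z := by
    rw [← MeasureTheory.integral_const_mul]
    refine MeasureTheory.setIntegral_mono_on ?_ ?_ measurableSet_ball ?_
    · exact integrableOn_of_continuous_bounded
        ((continuous_norm.comp hfd.continuous).pow 2)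
        (isCompact_closedBall w R) ball_subset_closedBall
    · exact ((hfi.restrict).const_mul _)
    · intro z hz
      have h0 : ‖f z‖ ^ 2 = Real.exp (eNormSq d z / 2) * fockIntegrand d f z := by
        rw [fockIntegrand]
        rw [← mul_assoc, mul_comm (Real.exp _), mul_assoc, ← Real.exp_add]
        simp [neg_div]
      rw [h0]
      refine mul_le_mul_of_nonneg_right ?_ (fockIntegrand_nonneg d f z)
      exact Real.exp_le_exp.mpr (by linarith [hweight z hz])
  have htot : (∫ z in ball w R, fockIntegrand d f z) ≤ ∫ z, fockIntegrand d f z :=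
    MeasureTheory.setIntegral_le_integral hfi
      (Filter.Eventually.of_forall (fockIntegrand_nonneg d f))
  have hfinal : ‖f w‖ ^ 2 * (π * R ^ 2) ^ d
      ≤ Real.exp B * ∫ z, fockIntegrand d f z := by
    refine le_trans hsq2 (le_trans hcomp ?_)
    exact mul_le_mul_of_nonneg_left htot (Real.exp_pos _).le
  rw [mul_assoc, inv_mul_eq_div, le_div_iff₀ hpos]
  exact hfinal

lemma affMap_differentiable (d : ℕ) (A : Matrix (Fin d) (Fin d) ℂ) (b : Fin d → ℂ) :
    Differentiable ℂ (affMap d A b) := by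
  apply differentiable_pi.mpr
  intro j
  have : (fun z : Fin d → ℂ => (affMap d A b z) j)
      = fun z => (∑ k, A j k * z k) + b j := by
    funext z
    simp [affMap, Matrix.mulVec, dotProduct]
  rw [this]
  exact (Differentiable.fun_sum fun k _ =>
    (differentiable_pi.mp differentiable_id k).const_mul _).add_const _

lemma eNorm_affMap_le {d : ℕ} {A : Matrix (Fin d) (Fin d) ℂ} {b : Fin d → ℂ} {s : ℝ}
    (hA : ∀ v, eNorm d (A.mulVec v) ≤ s * eNorm d v) (z : Fin d → ℂ) :
    eNorm d (affMap d A b z) ≤ s * eNorm d z + eNorm d b := by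
  calc eNorm d (A.mulVec z + b) ≤ eNorm d (A.mulVec z) + eNorm d b := eNorm_add_le d _ _
    _ ≤ s * eNorm d z + eNorm d b := by linarith [hA z]

/-- Composition with the affine contraction preserves membership in the Fock space. -/
lemma comp_affine_memFock {d : ℕ} {A : Matrix (Fin d) (Fin d) ℂ} {b : Fin d → ℂ} {s : ℝ}
    (hs0 : 0 ≤ s) (hs1 : s < 1) (hA : ∀ v, eNorm d (A.mulVec v) ≤ s * eNorm d v)
    {f : (Fin d → ℂ) → ℂ} (hfd : Differentiable ℂ f)
    (hfi : Integrable (fockIntegrand d f)) :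
    Differentiable ℂ (fun z => f (affMap d A b z)) ∧
      Integrable (fockIntegrand d (fun z => f (affMap d A b z))) := by
  have hdiff : Differentiable ℂ (fun z => f (affMap d A b z)) :=
    hfd.comp (affMap_differentiable d A b)
  refine ⟨hdiff, ?_⟩
  set ρ : ℝ := (1 - s ^ 2) / 2 with hρdef
  have hs2 : s ^ 2 < 1 := by nlinarith
  have hρ : 0 < ρ := by rw [hρdef]; linarith
  set δ : ℝ := (1 - s ^ 2) / 4 with hδdef
  have hδ : 0 < δ := by rw [hδdef]; linarith
  set β : ℝ := eNorm d b with hβdef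
  have hβ : 0 ≤ β := eNorm_nonneg d b
  set a : ℝ := (1 + ρ) * s * β with hadef
  set M : ℝ := a ^ 2 / (2 * δ) + (1 + ρ) * β ^ 2 / 2 with hMdef
  set If : ℝ := ∫ z, fockIntegrand d f z with hIf
  have hIf0 : 0 ≤ If :=
    MeasureTheory.integral_nonneg (fockIntegrand_nonneg d f)
  -- the quadratic exponent bound
  have hkey : ∀ t : ℝ, 0 ≤ t →
      (1 + ρ) * (s * t + β) ^ 2 / 2 - t ^ 2 / 2 ≤ M - δ / 2 * t ^ 2 := by
    intro t ht
    have h1 : (1 + ρ) * s ^ 2 ≤ 1 - 2 * δ := by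
      rw [hρdef, hδdef]
      nlinarith [sq_nonneg s]
    have h2δ : (0:ℝ) < 2 * δ := by linarith
    have hre : δ / 2 * t ^ 2 + a ^ 2 / (2 * δ) = (δ ^ 2 * t ^ 2 + a ^ 2) / (2 * δ) := by
      field_simp
    have h3 : a * t ≤ δ / 2 * t ^ 2 + a ^ 2 / (2 * δ) := by
      rw [hre, le_div_iff₀ h2δ]
      nlinarith [sq_nonneg (δ * t - a)]
    nlinarith [mul_le_mul_of_nonneg_right h1 (sq_nonneg t), h3]
  -- pointwise bound on the integrand of the composition
  set C : ℝ := ((π * ρ ^ 2) ^ d)⁻¹ * Real.exp (↑d * (ρ + ρ ^ 2) / 2 + M) * If with hC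
  have hbound : ∀ z, fockIntegrand d (fun z => f (affMap d A b z)) z
      ≤ C * Real.exp (-(δ / 2) * eNormSq d z) := by
    intro z
    set w := affMap d A b z with hw
    set t : ℝ := eNorm d z with htdef
    have ht0 : 0 ≤ t := eNorm_nonneg d z
    have hwnorm : eNorm d w ≤ s * t + β := eNorm_affMap_le hA z
    have hwsq : eNormSq d w ≤ (s * t + β) ^ 2 := by
      rw [eNormSq_eq_sq]
      exact pow_le_pow_left₀ (eNorm_nonneg d w) hwnorm 2
    have hpb := pointwise_bound hfd hfi hρ w
    have hinv : (0:ℝ) ≤ ((π * ρ ^ 2) ^ d)⁻¹ := by positivity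
    have step1 : fockIntegrand d (fun z => f (affMap d A b z)) z
        ≤ ((π * ρ ^ 2) ^ d)⁻¹
          * Real.exp (((1 + ρ) * eNormSq d w + ↑d * (ρ + ρ ^ 2)) / 2) * If
          * Real.exp (-(eNormSq d z) / 2) := by
      rw [fockIntegrand]
      exact mul_le_mul_of_nonneg_right hpb (Real.exp_pos _).le
    refine le_trans step1 ?_
    have hexp : ((1 + ρ) * eNormSq d w + ↑d * (ρ + ρ ^ 2)) / 2 + -(eNormSq d z) / 2
        ≤ (↑d * (ρ + ρ ^ 2) / 2 + M) + -(δ / 2) * eNormSq d z := by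
      have hEz : eNormSq d z = t ^ 2 := eNormSq_eq_sq d z
      have h1ρ : (0:ℝ) ≤ 1 + ρ := by linarith
      have hstep : (1 + ρ) * eNormSq d w ≤ (1 + ρ) * (s * t + β) ^ 2 :=
        mul_le_mul_of_nonneg_left hwsq h1ρ
      rw [hEz]
      have hq := hkey t ht0
      linarith
    have hinv2 : (0:ℝ) ≤ ((π * ρ ^ 2) ^ d)⁻¹ * If := mul_nonneg hinv hIf0
    calc ((π * ρ ^ 2) ^ d)⁻¹
          * Real.exp (((1 + ρ) * eNormSq d w + ↑d * (ρ + ρ ^ 2)) / 2) * If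
          * Real.exp (-(eNormSq d z) / 2)
        = ((π * ρ ^ 2) ^ d)⁻¹ * If
          * Real.exp (((1 + ρ) * eNormSq d w + ↑d * (ρ + ρ ^ 2)) / 2 + -(eNormSq d z) / 2) := by
          rw [Real.exp_add]; ring
      _ ≤ ((π * ρ ^ 2) ^ d)⁻¹ * If
          * Real.exp ((↑d * (ρ + ρ ^ 2) / 2 + M) + -(δ / 2) * eNormSq d z) :=
          mul_le_mul_of_nonneg_left (Real.exp_le_exp.mpr hexp) hinv2
      _ = C * Real.exp (-(δ / 2) * eNormSq d z) := by
          rw [hC, Real.exp_add]; ring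
  -- conclude integrability by domination
  have hδ2 : (0:ℝ) < δ / 2 := by linarith
  have hdom : Integrable (fun z : Fin d → ℂ => C * Real.exp (-(δ / 2) * eNormSq d z)) :=
    (gaussian_integrable d hδ2).const_mul C
  refine hdom.mono' ?_ ?_
  · exact (fockIntegrand_continuous hdiff.continuous).aestronglyMeasurable
  · refine Filter.Eventually.of_forall fun z => ?_
    rw [Real.norm_eq_abs, abs_of_nonneg (fockIntegrand_nonneg d _ z)]
    exact hbound z


lemma memFock_smul {d : ℕ} (c : ℂ) {f : (Fin d → ℂ) → ℂ} (hf : MemFock d f) :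
    MemFock d (fun z => c * f z) := by
  refine ⟨hf.1.const_mul c, ?_⟩
  refine (hf.2.const_mul (‖c‖ ^ 2)).congr
    (Filter.Eventually.of_forall fun z => ?_)
  simp only [fockIntegrand, norm_mul, mul_pow]
  ring

lemma memFock_add {d : ℕ} {f g : (Fin d → ℂ) → ℂ} (hf : MemFock d f) (hg : MemFock d g) :
    MemFock d (fun z => f z + g z) := by
  refine ⟨hf.1.add hg.1, ?_⟩
  have hdom : Integrable (fun z => 2 * fockIntegrand d f z + 2 * fockIntegrand d g z) :=
    (hf.2.const_mul 2).add (hg.2.const_mul 2)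
  refine hdom.mono' ?_ ?_
  · exact (fockIntegrand_continuous (hf.1.add hg.1).continuous).aestronglyMeasurable
  · refine Filter.Eventually.of_forall fun z => ?_
    rw [Real.norm_eq_abs, abs_of_nonneg (fockIntegrand_nonneg d _ z)]
    simp only [fockIntegrand]
    have h1 : ‖f z + g z‖ ^ 2
        ≤ 2 * ‖f z‖ ^ 2 + 2 * ‖g z‖ ^ 2 := by
      have h2 : ‖f z + g z‖ ≤ ‖f z‖ + ‖g z‖ :=
        norm_add_le _ _
      nlinarith [sq_nonneg (‖f z‖ - ‖g z‖),
        norm_nonneg (f z + g z), norm_nonneg (f z), norm_nonneg (g z)]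
    nlinarith [Real.exp_pos (-(eNormSq d z) / 2), h1]

lemma memFock_sub {d : ℕ} {f g : (Fin d → ℂ) → ℂ} (hf : MemFock d f) (hg : MemFock d g) :
    MemFock d (fun z => f z - g z) := by
  have h1 := memFock_add hf (memFock_smul (-1) hg)
  have hEq : (fun z => f z + (-1 : ℂ) * g z) = fun z => f z - g z := by
    funext z
    ring
  rwa [hEq] at h1

lemma memFock_sum {d : ℕ} (s : Finset ℕ) (u : ℕ → (Fin d → ℂ) → ℂ)
    (h : ∀ n ∈ s, MemFock d (u n)) :
    MemFock d (fun z => ∑ n ∈ s, u n z) := by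
  classical
  induction s using Finset.induction with
  | empty => simpa using memFock_const d 0
  | @insert n s hn ih =>
    have h1 := memFock_add (h n (Finset.mem_insert_self n s))
      (ih fun k hk => h k (Finset.mem_insert_of_mem hk))
    have hEq : (fun z => u n z + ∑ k ∈ s, u k z) = fun z => ∑ k ∈ insert n s, u k z := by
      funext z
      rw [Finset.sum_insert hn]
    rwa [hEq] at h1

lemma exists_fixed_point {d : ℕ} {A : Matrix (Fin d) (Fin d) ℂ} (b : Fin d → ℂ) {s : ℝ}
    (hs1 : s < 1) (hA : ∀ v, eNorm d (A.mulVec v) ≤ s * eNorm d v) :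
    ∃ z₀, affMap d A b z₀ = z₀ := by
  set L := Matrix.mulVecLin (1 - A) with hL
  have hker : ∀ v, L v = 0 → v = 0 := by
    intro v hv
    rw [hL, Matrix.mulVecLin_apply, Matrix.sub_mulVec, Matrix.one_mulVec, sub_eq_zero] at hv
    have h1 : eNorm d v ≤ s * eNorm d v := by
      calc eNorm d v = eNorm d (A.mulVec v) := by rw [← hv]
        _ ≤ s * eNorm d v := hA v
    have h2 : eNorm d v = 0 := by nlinarith [eNorm_nonneg d v]
    exact eNorm_eq_zero h2
  have hinj : Function.Injective L := by
    rw [← LinearMap.ker_eq_bot]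
    exact LinearMap.ker_eq_bot'.mpr hker
  obtain ⟨z₀, hz₀⟩ := (LinearMap.injective_iff_surjective.mp hinj) b
  refine ⟨z₀, ?_⟩
  rw [hL, Matrix.mulVecLin_apply, Matrix.sub_mulVec, Matrix.one_mulVec] at hz₀
  rw [affMap]
  rw [← hz₀]
  abel

lemma lower_bound {d : ℕ} {G : (Fin d → ℂ) → ℂ} (hmemG : MemFock d G) (z₀ : Fin d → ℂ)
    (hGz : ‖G z₀‖ = 1) :
    Real.sqrt (((2 * Real.pi) ^ d)⁻¹ * (Real.pi ^ d
      * Real.exp (-(((1 + 1) * eNormSq d z₀ + ↑d * (1 + 1)) / 2))))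
      ≤ fockNorm d G := by
  have hpb := pointwise_bound hmemG.1 hmemG.2 one_pos z₀
  rw [hGz] at hpb
  simp only [one_pow, mul_one] at hpb
  set B₀ : ℝ := ((1 + 1) * eNormSq d z₀ + ↑d * (1 + 1)) / 2 with hB₀
  have hX : (0:ℝ) < (Real.pi ^ d)⁻¹ * Real.exp B₀ := by positivity
  have h2 : Real.pi ^ d * Real.exp (-B₀) ≤ ∫ z, fockIntegrand d G z := by
    rw [Real.exp_neg]
    rw [show Real.pi ^ d * (Real.exp B₀)⁻¹ = ((Real.pi ^ d)⁻¹ * Real.exp B₀)⁻¹ by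
      rw [mul_inv, inv_inv]]
    rw [← one_div, div_le_iff₀ hX, mul_comm]
    calc (1:ℝ) ≤ (Real.pi ^ d)⁻¹ * Real.exp B₀ * ∫ z, fockIntegrand d G z := by
          convert hpb using 3
      _ = _ := by ring
  rw [fockNorm]
  apply Real.sqrt_le_sqrt
  have hc : (0:ℝ) ≤ ((2 * Real.pi) ^ d)⁻¹ := by positivity
  calc ((2 * Real.pi) ^ d)⁻¹ * (Real.pi ^ d * Real.exp (-B₀))
      ≤ ((2 * Real.pi) ^ d)⁻¹ * ∫ z, fockIntegrand d G z :=
        mul_le_mul_of_nonneg_left h2 hc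
    _ = _ := rfl

end FockAux

open FockAux in
/-- The set of cyclic vectors of a compact cyclic composition operator, together with 0,
contains no two-dimensional subspace. -/
theorem cyclic_vectors_no_two_dim_subspace
    (d : ℕ) (hd : 1 ≤ d) (A : Matrix (Fin d) (Fin d) ℂ) (b : Fin d → ℂ)
    (hop : ∃ r : ℝ, r < 1 ∧ ∀ v, eNorm d (A.mulVec v) ≤ r * eNorm d v)
    (hcyc : IsCyclicOp d A b) :
    ∀ f g : (Fin d → ℂ) → ℂ, MemFock d f → MemFock d g →
      LinearIndependent ℂ ![f, g] →
      ∃ a b' : ℂ, ¬(a = 0 ∧ b' = 0) ∧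
        ¬ IsCyclicVector d A b (fun z => a * f z + b' * g z) := by
  intro f g hf hg _hli
  obtain ⟨r, hr1, hA⟩ := hop
  set s : ℝ := max r 0 with hs
  have hs0 : 0 ≤ s := le_max_right _ _
  have hs1 : s < 1 := max_lt hr1 one_pos
  have hA' : ∀ v, eNorm d (A.mulVec v) ≤ s * eNorm d v := fun v =>
    le_trans (hA v) (mul_le_mul_of_nonneg_right (le_max_left _ _) (eNorm_nonneg d v))
  obtain ⟨z₀, hz₀⟩ := exists_fixed_point b hs1 hA'
  have hiter : ∀ n, (affMap d A b)^[n] z₀ = z₀ := fun n => Function.iterate_fixed hz₀ n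
  obtain ⟨a, b', hab, hzero⟩ :
      ∃ a b' : ℂ, ¬(a = 0 ∧ b' = 0) ∧ a * f z₀ + b' * g z₀ = 0 := by
    by_cases h1 : f z₀ = 0
    · exact ⟨1, 0, by simp, by simp [h1]⟩
    · refine ⟨g z₀, -f z₀, ?_, by ring⟩
      rintro ⟨-, h2⟩
      exact h1 (by simpa using h2)
  refine ⟨a, b', hab, ?_⟩
  rintro ⟨hmem, hcy⟩
  have hiterMemFock : ∀ n, MemFock d (fun z => a * f ((affMap d A b)^[n] z)
      + b' * g ((affMap d A b)^[n] z)) := by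
    intro n
    induction n with
    | zero => simpa using hmem
    | succ n ih =>
      have heq : (fun z => a * f ((affMap d A b)^[n+1] z) + b' * g ((affMap d A b)^[n+1] z))
          = fun z => (fun y => a * f ((affMap d A b)^[n] y) + b' * g ((affMap d A b)^[n] y))
            (affMap d A b z) := by
        funext z
        rw [Function.iterate_succ_apply]
      rw [heq]
      exact comp_affine_memFock hs0 hs1 hA' ih.1 ih.2
  set ε : ℝ := Real.sqrt (((2 * Real.pi) ^ d)⁻¹ * (Real.pi ^ d
    * Real.exp (-(((1 + 1) * eNormSq d z₀ + ↑d * (1 + 1)) / 2)))) with hε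
  have hεpos : 0 < ε := Real.sqrt_pos.mpr (by positivity)
  obtain ⟨m, c, hlt⟩ := hcy (fun _ => 1) (memFock_const d 1) ε hεpos
  revert hlt
  rw [imp_false, not_lt]
  have hmemG : MemFock d (fun z => (fun _ : Fin d → ℂ => (1:ℂ)) z
      - ∑ n ∈ Finset.range (m + 1), c n
        * ((fun z => a * f z + b' * g z) ((affMap d A b)^[n] z))) := by
    refine memFock_sub (memFock_const d 1) ?_
    exact memFock_sum (Finset.range (m+1))
      (fun n => fun z => c n * ((fun z => a * f z + b' * g z) ((affMap d A b)^[n] z)))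
      (fun n _ => memFock_smul (c n) (hiterMemFock n))
  have hGz : ‖(fun z => (fun _ : Fin d → ℂ => (1:ℂ)) z
      - ∑ n ∈ Finset.range (m + 1), c n
        * ((fun z => a * f z + b' * g z) ((affMap d A b)^[n] z))) z₀‖ = 1 := by
    simp only [hiter, hzero, mul_zero, Finset.sum_const_zero, sub_zero]
    simp
  exact lower_bound hmemG z₀ hGz
end
end
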